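/- The functional J_∞(Q) = (1/|N|) Σ_{ℓ∈Z²_N} Ψ(ζ_ℓ) exp(−Q(ζ_ℓ)) + Σ_{k∈Λ} q_k c_k, defined on all real trigonometric polynomials Q with support Λ (no positivity constraint), is strictly convex when Ψ(ζ_ℓ) > 0 for all ℓ and 2n_j < N_j; its second variation along δQ is (1/|N|) Σ_ℓ Ψ(ζ_ℓ) e^{−Q(ζ_ℓ)} δQ(ζ_ℓ)², which vanishes only for δQ = 0. -/

import Mathlib

open Finset

lemma sum_exp_orth (N : ℕ) (hN : 0 < N) (m : ℤ) :
    ∑ ℓ ∈ Finset.range N, Complex.exp (Complex.I * (m : ℂ) * (ℓ : ℂ) * (2 * Real.pi / N)) =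
      if (N : ℤ) ∣ m then (N : ℂ) else 0 := by
  have hN' : (N : ℂ) ≠ 0 := Nat.cast_ne_zero.2 hN.ne'
  have hpi : (Real.pi : ℂ) ≠ 0 := by exact_mod_cast Real.pi_ne_zero
  have hI := Complex.I_ne_zero
  have hz : ∀ ℓ : ℕ, Complex.exp (Complex.I * (m:ℂ) * (ℓ:ℂ) * (2 * Real.pi / N)) =
      (Complex.exp (Complex.I * (m:ℂ) * (2 * Real.pi / N))) ^ ℓ := by
    intro ℓ
    rw [← Complex.exp_nat_mul]
    ring_nf
  simp only [hz]
  set z := Complex.exp (Complex.I * (m:ℂ) * (2 * Real.pi / N)) with hzdef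
  by_cases h : (N:ℤ) ∣ m
  · rw [if_pos h]
    obtain ⟨j, hj⟩ := h
    have hz1 : z = 1 := by
      rw [hzdef, Complex.exp_eq_one_iff]
      refine ⟨j, ?_⟩
      have hm : (m : ℂ) = (N : ℂ) * (j : ℂ) := by exact_mod_cast congrArg (Int.cast : ℤ → ℂ) hj
      field_simp [hm]
      linear_combination hm
    simp [hz1]
  · have hz1 : z ≠ 1 := by
      intro hz1
      rw [hzdef, Complex.exp_eq_one_iff] at hz1
      obtain ⟨j, hj⟩ := hz1
      apply h
      refine ⟨j, ?_⟩
      have hm : (m : ℂ) = (N : ℂ) * (j : ℂ) := by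
        field_simp at hj
        have : (m:ℂ) * (2 * Real.pi * Complex.I) = ((N:ℂ)*(j:ℂ)) * (2 * Real.pi * Complex.I) := by
          linear_combination (2 * Real.pi * Complex.I) * hj
        exact mul_right_cancel₀ (by simp [hpi, hI, two_ne_zero]) this
      exact_mod_cast hm
    have hzN : z ^ N = 1 := by
      rw [hzdef, ← Complex.exp_nat_mul]
      have harg : (N:ℂ) * (Complex.I * (m:ℂ) * (2 * Real.pi / N))
          = (m:ℂ) * (2 * Real.pi * Complex.I) := by
        field_simp
      rw [harg]
      exact_mod_cast Complex.exp_int_mul_two_pi_mul_I m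
    rw [geom_sum_eq hz1, hzN]
    simp [h]
open Finset
section
variable (n₁ n₂ N₁ N₂ : ℕ) (ζ : ℤ × ℤ → ℕ × ℕ → ℂ)
  (hζ : ∀ k ℓ, ζ k ℓ =
      Complex.exp (Complex.I * (k.1 : ℂ) * (ℓ.1 : ℂ) * (2 * Real.pi / N₁)) *
      Complex.exp (Complex.I * (k.2 : ℂ) * (ℓ.2 : ℂ) * (2 * Real.pi / N₂)))

include hζ

lemma zeta_conj (k : ℤ × ℤ) (ℓ : ℕ × ℕ) : (starRingEnd ℂ) (ζ k ℓ) = ζ (-k) ℓ := by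
  rw [hζ, hζ]
  rw [map_mul, ← Complex.exp_conj, ← Complex.exp_conj]
  congr 1
  · congr 1
    simp [Complex.ext_iff]
  · congr 1
    simp [Complex.ext_iff]

lemma zeta_mul (k k' : ℤ × ℤ) (ℓ : ℕ × ℕ) : ζ k ℓ * ζ k' ℓ = ζ (k + k') ℓ := by
  rw [hζ, hζ, hζ, ← Complex.exp_add, ← Complex.exp_add, ← Complex.exp_add, ← Complex.exp_add]
  congr 1
  simp only [Prod.fst_add, Prod.snd_add]
  push_cast
  ring

lemma zeta_sum (hN₁ : 0 < N₁) (hN₂ : 0 < N₂) (m : ℤ × ℤ) :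
    ∑ ℓ ∈ Finset.range N₁ ×ˢ Finset.range N₂, ζ m ℓ =
      (if (N₁ : ℤ) ∣ m.1 then (N₁ : ℂ) else 0) * (if (N₂ : ℤ) ∣ m.2 then (N₂ : ℂ) else 0) := by
  rw [Finset.sum_product]
  rw [← sum_exp_orth N₁ hN₁ m.1, ← sum_exp_orth N₂ hN₂ m.2, Finset.sum_mul_sum]
  exact Finset.sum_congr rfl fun ℓ₁ _ => Finset.sum_congr rfl fun ℓ₂ _ => hζ m (ℓ₁, ℓ₂)

lemma key_zero (h₁ : 2 * n₁ < N₁) (h₂ : 2 * n₂ < N₂) (q : ℤ × ℤ → ℝ)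
    (hsym : ∀ k, q k = q (-k))
    (hsupp : ∀ k ∉ Finset.Icc (-(n₁ : ℤ)) (n₁ : ℤ) ×ˢ Finset.Icc (-(n₂ : ℤ)) (n₂ : ℤ), q k = 0)
    (hz : ∀ ℓ ∈ Finset.range N₁ ×ˢ Finset.range N₂,
      (∑ k ∈ Finset.Icc (-(n₁ : ℤ)) (n₁ : ℤ) ×ˢ Finset.Icc (-(n₂ : ℤ)) (n₂ : ℤ),
        (q k : ℂ) * ζ k ℓ).re = 0) : q = 0 := by
  have hN₁ : 0 < N₁ := by omega
  have hN₂ : 0 < N₂ := by omega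
  set Λ := Finset.Icc (-(n₁ : ℤ)) (n₁ : ℤ) ×ˢ Finset.Icc (-(n₂ : ℤ)) (n₂ : ℤ) with hΛ
  set G := Finset.range N₁ ×ˢ Finset.range N₂ with hG
  set S : ℕ × ℕ → ℂ := fun ℓ => ∑ k ∈ Λ, (q k : ℂ) * ζ k ℓ with hS
  have hreal : ∀ ℓ, (starRingEnd ℂ) (S ℓ) = S ℓ := by
    intro ℓ
    rw [hS, map_sum]
    calc ∑ k ∈ Λ, (starRingEnd ℂ) ((q k : ℂ) * ζ k ℓ)
        = ∑ k ∈ Λ, (q (-k) : ℂ) * ζ (-k) ℓ := by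
          refine Finset.sum_congr rfl fun k _ => ?_
          rw [map_mul, Complex.conj_ofReal, zeta_conj N₁ N₂ ζ hζ, ← hsym]
      _ = ∑ k ∈ Λ, (q k : ℂ) * ζ k ℓ := by
          refine Finset.sum_equiv (Equiv.neg (ℤ × ℤ)) (fun k => ?_) (fun k _ => rfl)
          simp only [hΛ, Finset.mem_product, Finset.mem_Icc, Equiv.neg_apply, Prod.fst_neg,
            Prod.snd_neg]
          omega
  have hS0 : ∀ ℓ ∈ G, S ℓ = 0 := by
    intro ℓ hℓ
    have := (Complex.conj_eq_iff_re.mp (hreal ℓ)).symm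
    rw [this, hz ℓ hℓ, Complex.ofReal_zero]
  funext k₀
  by_cases hk₀ : k₀ ∈ Λ
  · have main : ∑ ℓ ∈ G, S ℓ * ζ (-k₀) ℓ = (q k₀ : ℂ) * ((N₁ : ℂ) * (N₂ : ℂ)) := by
      calc ∑ ℓ ∈ G, S ℓ * ζ (-k₀) ℓ
          = ∑ ℓ ∈ G, ∑ k ∈ Λ, (q k : ℂ) * ζ (k - k₀) ℓ := by
            refine Finset.sum_congr rfl fun ℓ _ => ?_
            rw [hS, Finset.sum_mul]
            refine Finset.sum_congr rfl fun k _ => ?_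
            rw [mul_assoc, zeta_mul N₁ N₂ ζ hζ, sub_eq_add_neg]
        _ = ∑ k ∈ Λ, (q k : ℂ) * ∑ ℓ ∈ G, ζ (k - k₀) ℓ := by
            rw [Finset.sum_comm]
            exact Finset.sum_congr rfl fun k _ => (Finset.mul_sum _ _ _).symm
        _ = (q k₀ : ℂ) * ((N₁ : ℂ) * (N₂ : ℂ)) := by
            rw [Finset.sum_eq_single k₀]
            · rw [zeta_sum N₁ N₂ ζ hζ hN₁ hN₂]
              simp
            · intro k hk hne
              rw [zeta_sum N₁ N₂ ζ hζ hN₁ hN₂]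
              simp only [hΛ, Finset.mem_product, Finset.mem_Icc] at hk hk₀
              have hor : k.1 ≠ k₀.1 ∨ k.2 ≠ k₀.2 := by
                by_contra hc
                push_neg at hc
                exact hne (Prod.ext hc.1 hc.2)
              rcases hor with h | h
              · have : ¬ (N₁ : ℤ) ∣ (k - k₀).1 := by
                  intro hd
                  have := Int.eq_zero_of_abs_lt_dvd hd (by
                    simp only [Prod.fst_sub]
                    rw [abs_lt]
                    omega)
                  simp only [Prod.fst_sub] at this
                  omega
                rw [if_neg this]
                ring
              · have : ¬ (N₂ : ℤ) ∣ (k - k₀).2 := by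
                  intro hd
                  have := Int.eq_zero_of_abs_lt_dvd hd (by
                    simp only [Prod.snd_sub]
                    rw [abs_lt]
                    omega)
                  simp only [Prod.snd_sub] at this
                  omega
                rw [if_neg this]
                ring
            · intro h
              exact absurd hk₀ h
    rw [Finset.sum_congr rfl (fun ℓ hℓ => by rw [hS0 ℓ hℓ, zero_mul]), Finset.sum_const_zero] at main
    have hNZ : ((N₁ : ℂ) * (N₂ : ℂ)) ≠ 0 := by
      simp [Nat.cast_ne_zero, hN₁.ne', hN₂.ne']
    have : (q k₀ : ℂ) = 0 := by
      rcases mul_eq_zero.mp main.symm with h | h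
      · exact h
      · exact absurd h hNZ
    exact_mod_cast this
  · exact hsupp k₀ hk₀
end

lemma iter2 {ι : Type*} (s : Finset ι) (C D : ι → ℝ) (A E : ℝ) :
    iteratedDeriv 2 (fun t : ℝ => (∑ ℓ ∈ s, C ℓ * Real.exp (D ℓ * t)) + (A + E * t)) 0
      = ∑ ℓ ∈ s, C ℓ * D ℓ ^ 2 := by
  have hd1 : ∀ t : ℝ, HasDerivAt (fun t : ℝ => (∑ ℓ ∈ s, C ℓ * Real.exp (D ℓ * t)) + (A + E * t))
      ((∑ ℓ ∈ s, C ℓ * D ℓ * Real.exp (D ℓ * t)) + E) t := by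
    intro t
    have h1 : HasDerivAt (fun t : ℝ => ∑ ℓ ∈ s, C ℓ * Real.exp (D ℓ * t))
        (∑ ℓ ∈ s, C ℓ * D ℓ * Real.exp (D ℓ * t)) t := by
      refine HasDerivAt.fun_sum fun ℓ _ => ?_
      have := (((hasDerivAt_id t).const_mul (D ℓ)).exp).const_mul (C ℓ)
      simpa [mul_comm, mul_assoc, mul_left_comm] using this
    have h2 : HasDerivAt (fun t : ℝ => A + E * t) E t := by
      simpa using ((hasDerivAt_id t).const_mul E).const_add A
    exact h1.add h2
  have hd2 : ∀ t : ℝ, HasDerivAt (fun t : ℝ => (∑ ℓ ∈ s, C ℓ * D ℓ * Real.exp (D ℓ * t)) + E)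
      (∑ ℓ ∈ s, C ℓ * D ℓ * D ℓ * Real.exp (D ℓ * t)) t := by
    intro t
    have h1 : HasDerivAt (fun t : ℝ => ∑ ℓ ∈ s, C ℓ * D ℓ * Real.exp (D ℓ * t))
        (∑ ℓ ∈ s, C ℓ * D ℓ * D ℓ * Real.exp (D ℓ * t)) t := by
      refine HasDerivAt.fun_sum fun ℓ _ => ?_
      have := (((hasDerivAt_id t).const_mul (D ℓ)).exp).const_mul (C ℓ * D ℓ)
      simpa [mul_comm, mul_assoc, mul_left_comm] using this
    simpa using h1.add_const E
  have e1 : deriv (fun t : ℝ => (∑ ℓ ∈ s, C ℓ * Real.exp (D ℓ * t)) + (A + E * t))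
      = fun t : ℝ => (∑ ℓ ∈ s, C ℓ * D ℓ * Real.exp (D ℓ * t)) + E :=
    funext fun t => (hd1 t).deriv
  rw [iteratedDeriv_succ, iteratedDeriv_one, e1, (hd2 0).deriv]
  simp [pow_two, mul_assoc]
/-- The dual functional `J_∞` is strictly convex on the space of real symmetric
trigonometric polynomials with support `Λ` (no positivity constraint); its second
variation along `δQ` is `(1/|N|) Σ_ℓ Ψ(ζ_ℓ) e^{−Q(ζ_ℓ)} δQ(ζ_ℓ)²`, which vanishes
only for `δQ = 0`. -/
theorem stmt14 (n₁ n₂ N₁ N₂ : ℕ) (h₁ : 2 * n₁ < N₁) (h₂ : 2 * n₂ < N₂)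
    (ζ : ℤ × ℤ → ℕ × ℕ → ℂ)
    (hζ : ∀ k ℓ, ζ k ℓ =
      Complex.exp (Complex.I * (k.1 : ℂ) * (ℓ.1 : ℂ) * (2 * Real.pi / N₁)) *
      Complex.exp (Complex.I * (k.2 : ℂ) * (ℓ.2 : ℂ) * (2 * Real.pi / N₂)))
    (Ψ : ℕ × ℕ → ℝ) (hΨ : ∀ ℓ ∈ Finset.range N₁ ×ˢ Finset.range N₂, 0 < Ψ ℓ)
    (c : ℤ × ℤ → ℝ)
    (Qv : (ℤ × ℤ → ℝ) → ℕ × ℕ → ℝ)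
    (hQv : ∀ q ℓ, Qv q ℓ =
      (∑ k ∈ Finset.Icc (-(n₁ : ℤ)) (n₁ : ℤ) ×ˢ Finset.Icc (-(n₂ : ℤ)) (n₂ : ℤ),
        (q k : ℂ) * ζ k ℓ).re)
    (B : Set (ℤ × ℤ → ℝ))
    (hB : B = {q | (∀ k, q k = q (-k)) ∧
      ∀ k ∉ Finset.Icc (-(n₁ : ℤ)) (n₁ : ℤ) ×ˢ Finset.Icc (-(n₂ : ℤ)) (n₂ : ℤ), q k = 0})
    (J : (ℤ × ℤ → ℝ) → ℝ)
    (hJ : ∀ q, J q = (1 / ((N₁ : ℝ) * (N₂ : ℝ))) *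
        ∑ ℓ ∈ Finset.range N₁ ×ˢ Finset.range N₂,
          Ψ ℓ * Real.exp (-(Qv q ℓ))
      + ∑ k ∈ Finset.Icc (-(n₁ : ℤ)) (n₁ : ℤ) ×ˢ Finset.Icc (-(n₂ : ℤ)) (n₂ : ℤ),
          q k * c k) :
    StrictConvexOn ℝ B J ∧
    ∀ q ∈ B, ∀ δq ∈ B,
      iteratedDeriv 2 (fun t : ℝ => J (q + t • δq)) 0 =
        (1 / ((N₁ : ℝ) * (N₂ : ℝ))) *
          ∑ ℓ ∈ Finset.range N₁ ×ˢ Finset.range N₂,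
            Ψ ℓ * Real.exp (-(Qv q ℓ)) * Qv δq ℓ ^ 2 ∧
      ((1 / ((N₁ : ℝ) * (N₂ : ℝ))) *
          ∑ ℓ ∈ Finset.range N₁ ×ˢ Finset.range N₂,
            Ψ ℓ * Real.exp (-(Qv q ℓ)) * Qv δq ℓ ^ 2 = 0 → δq = 0) := by
  have hN₁ : 0 < N₁ := by omega
  have hN₂ : 0 < N₂ := by omega
  have hP : (0:ℝ) < 1 / ((N₁ : ℝ) * (N₂ : ℝ)) := by positivity
  -- linearity of Qv
  have Qv_lin : ∀ (a b : ℝ) (x y : ℤ × ℤ → ℝ) ℓ,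
      Qv (a • x + b • y) ℓ = a * Qv x ℓ + b * Qv y ℓ := by
    intro a b x y ℓ
    rw [hQv, hQv, hQv, ← Complex.re_ofReal_mul, ← Complex.re_ofReal_mul, ← Complex.add_re]
    congr 1
    rw [Finset.mul_sum, Finset.mul_sum, ← Finset.sum_add_distrib]
    refine Finset.sum_congr rfl fun k _ => ?_
    simp only [Pi.add_apply, Pi.smul_apply, smul_eq_mul]
    push_cast
    ring
  -- key injectivity
  have hkey : ∀ δ ∈ B, (∀ ℓ ∈ Finset.range N₁ ×ˢ Finset.range N₂, Qv δ ℓ = 0) → δ = 0 := by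
    intro δ hδ hz
    rw [hB] at hδ
    exact key_zero n₁ n₂ N₁ N₂ ζ hζ h₁ h₂ δ hδ.1 hδ.2
      (fun ℓ hℓ => by rw [← hQv]; exact hz ℓ hℓ)
  -- B is convex
  have hBconv : Convex ℝ B := by
    rw [hB]
    intro x hx y hy a b _ _ _
    refine ⟨fun k => ?_, fun k hk => ?_⟩
    · simp only [Pi.add_apply, Pi.smul_apply, smul_eq_mul, hx.1 k, hy.1 k]
    · simp only [Pi.add_apply, Pi.smul_apply, smul_eq_mul, hx.2 k hk, hy.2 k hk,
        mul_zero, add_zero]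
  -- difference of distinct elements of B has a grid point where Qv differs
  have hdiff : ∀ x ∈ B, ∀ y ∈ B, x ≠ y →
      ∃ ℓ ∈ Finset.range N₁ ×ˢ Finset.range N₂, Qv x ℓ ≠ Qv y ℓ := by
    intro x hx y hy hne
    by_contra h
    push_neg at h
    have hsub : x - y ∈ B := by
      rw [hB] at hx hy ⊢
      refine ⟨fun k => ?_, fun k hk => ?_⟩
      · simp only [Pi.sub_apply, hx.1 k, hy.1 k]
      · simp only [Pi.sub_apply, hx.2 k hk, hy.2 k hk, sub_zero]
    have hz : ∀ ℓ ∈ Finset.range N₁ ×ˢ Finset.range N₂, Qv (x - y) ℓ = 0 := by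
      intro ℓ hℓ
      have hxy : x - y = (1:ℝ) • x + (-1:ℝ) • y := by
        funext k; simp; ring
      rw [hxy, Qv_lin, h ℓ hℓ]; ring
    exact hne (sub_eq_zero.mp (hkey _ hsub hz))
  -- strict convexity
  have hSC : StrictConvexOn ℝ B J := by
    refine ⟨hBconv, fun x hx y hy hne a b ha hb hab => ?_⟩
    obtain ⟨ℓ₀, hℓ₀, hℓ₀ne⟩ := hdiff x hx y hy hne
    have hsum : ∑ ℓ ∈ Finset.range N₁ ×ˢ Finset.range N₂,
        Ψ ℓ * Real.exp (-(Qv (a • x + b • y) ℓ)) <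
        ∑ ℓ ∈ Finset.range N₁ ×ˢ Finset.range N₂,
          (a * (Ψ ℓ * Real.exp (-(Qv x ℓ))) + b * (Ψ ℓ * Real.exp (-(Qv y ℓ)))) := by
      refine Finset.sum_lt_sum (fun ℓ hℓ => ?_) ⟨ℓ₀, hℓ₀, ?_⟩
      · have hexp := convexOn_exp.2 (Set.mem_univ (-(Qv x ℓ))) (Set.mem_univ (-(Qv y ℓ)))
          ha.le hb.le hab
        simp only [smul_eq_mul] at hexp
        have harg : -(Qv (a • x + b • y) ℓ) = a * -(Qv x ℓ) + b * -(Qv y ℓ) := by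
          rw [Qv_lin]; ring
        rw [harg]
        nlinarith [(hΨ ℓ hℓ), Real.exp_pos (-(Qv x ℓ)), Real.exp_pos (-(Qv y ℓ))]
      · have hexp := strictConvexOn_exp.2 (Set.mem_univ (-(Qv x ℓ₀))) (Set.mem_univ (-(Qv y ℓ₀)))
          (by simpa using hℓ₀ne) ha hb hab
        simp only [smul_eq_mul] at hexp
        have harg : -(Qv (a • x + b • y) ℓ₀) = a * -(Qv x ℓ₀) + b * -(Qv y ℓ₀) := by
          rw [Qv_lin]; ring
        rw [harg]
        nlinarith [(hΨ ℓ₀ hℓ₀)]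
    have hlin : ∑ k ∈ Finset.Icc (-(n₁ : ℤ)) (n₁ : ℤ) ×ˢ Finset.Icc (-(n₂ : ℤ)) (n₂ : ℤ),
        (a • x + b • y) k * c k =
        a * ∑ k ∈ Finset.Icc (-(n₁ : ℤ)) (n₁ : ℤ) ×ˢ Finset.Icc (-(n₂ : ℤ)) (n₂ : ℤ), x k * c k
        + b * ∑ k ∈ Finset.Icc (-(n₁ : ℤ)) (n₁ : ℤ) ×ˢ Finset.Icc (-(n₂ : ℤ)) (n₂ : ℤ),
            y k * c k := by
      rw [Finset.mul_sum, Finset.mul_sum, ← Finset.sum_add_distrib]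
      refine Finset.sum_congr rfl fun k _ => ?_
      simp only [Pi.add_apply, Pi.smul_apply, smul_eq_mul]
      ring
    rw [hJ, hJ, hJ, hlin]
    have h2 := mul_lt_mul_of_pos_left hsum hP
    rw [Finset.sum_add_distrib, ← Finset.mul_sum, ← Finset.mul_sum] at h2
    set S1 := ∑ ℓ ∈ Finset.range N₁ ×ˢ Finset.range N₂, Ψ ℓ * Real.exp (-(Qv x ℓ))
    set S2 := ∑ ℓ ∈ Finset.range N₁ ×ˢ Finset.range N₂, Ψ ℓ * Real.exp (-(Qv y ℓ))
    simp only [smul_eq_mul]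
    nlinarith [h2]
  refine ⟨hSC, fun q hq δq hδq => ?_⟩
  -- second variation
  constructor
  · have hfun : (fun t : ℝ => J (q + t • δq)) = fun t : ℝ =>
        (∑ ℓ ∈ Finset.range N₁ ×ˢ Finset.range N₂,
          ((1 / ((N₁ : ℝ) * (N₂ : ℝ))) * (Ψ ℓ * Real.exp (-(Qv q ℓ)))) *
            Real.exp ((-(Qv δq ℓ)) * t))
        + ((∑ k ∈ Finset.Icc (-(n₁ : ℤ)) (n₁ : ℤ) ×ˢ Finset.Icc (-(n₂ : ℤ)) (n₂ : ℤ),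
              q k * c k)
          + (∑ k ∈ Finset.Icc (-(n₁ : ℤ)) (n₁ : ℤ) ×ˢ Finset.Icc (-(n₂ : ℤ)) (n₂ : ℤ),
              δq k * c k) * t) := by
      funext t
      rw [hJ]
      congr 1
      · rw [Finset.mul_sum]
        refine Finset.sum_congr rfl fun ℓ _ => ?_
        have hq' : q + t • δq = (1:ℝ) • q + t • δq := by rw [one_smul]
        rw [hq', Qv_lin]
        rw [show -(1 * Qv q ℓ + t * Qv δq ℓ) = -(Qv q ℓ) + (-(Qv δq ℓ)) * t by ring,
          Real.exp_add]
        ring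
      · rw [Finset.sum_mul, ← Finset.sum_add_distrib]
        refine Finset.sum_congr rfl fun k _ => ?_
        simp only [Pi.add_apply, Pi.smul_apply, smul_eq_mul]
        ring
    rw [hfun, iter2, Finset.mul_sum]
    refine Finset.sum_congr rfl fun ℓ _ => ?_
    ring
  · intro hzero
    have hsum0 : ∑ ℓ ∈ Finset.range N₁ ×ˢ Finset.range N₂,
        Ψ ℓ * Real.exp (-(Qv q ℓ)) * Qv δq ℓ ^ 2 = 0 := by
      rcases mul_eq_zero.mp hzero with h | h
      · exact absurd h hP.ne'
      · exact h
    have hterm : ∀ ℓ ∈ Finset.range N₁ ×ˢ Finset.range N₂,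
        Ψ ℓ * Real.exp (-(Qv q ℓ)) * Qv δq ℓ ^ 2 = 0 :=
      (Finset.sum_eq_zero_iff_of_nonneg (fun ℓ hℓ =>
        mul_nonneg (mul_nonneg (hΨ ℓ hℓ).le (Real.exp_pos _).le) (sq_nonneg _))).mp hsum0
    refine hkey δq hδq fun ℓ hℓ => ?_
    have h := hterm ℓ hℓ
    have h1 : Ψ ℓ * Real.exp (-(Qv q ℓ)) > 0 := mul_pos (hΨ ℓ hℓ) (Real.exp_pos _)
    have : Qv δq ℓ ^ 2 = 0 := by
      rcases mul_eq_zero.mp h with h' | h'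
      · exact absurd h' h1.ne'
      · exact h'
    exact pow_eq_zero_iff (by norm_num) |>.mp this
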